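/- For every positive integer n, the sum over k from 0 to n-1 of d_{n,k} = (1/n) * C(n-1+k, n-1) * C(2n-k, n+1) equals the generalized Catalan number c_n = (1/(2n+1)) * C(3n, n). -/

import Mathlib

private lemma vand_base (a : ℕ) : ∀ m : ℕ,
    ∑ k ∈ Finset.range (m+1), (a+k).choose a = (a+m+1).choose (a+1) := by
  intro m
  induction m with
  | zero => simp
  | succ m ih =>
      rw [Finset.sum_range_succ, ih, show a + (m+1) = a + m + 1 from by omega]
      have := Nat.choose_succ_succ (a+m+1) a
      simp only [Nat.succ_eq_add_one] at this
      omega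

private lemma vand (a : ℕ) : ∀ b m : ℕ,
    ∑ k ∈ Finset.range (m+1), (a+k).choose a * (b + (m-k)).choose b
      = (a+b+m+1).choose (a+b+1) := by
  intro b
  induction b with
  | zero =>
      intro m
      simpa using vand_base a m
  | succ b ih =>
      intro m
      induction m with
      | zero => simp
      | succ m ihm =>
          have h1 : ∑ k ∈ Finset.range (m+2),
              (a+k).choose a * ((b+1) + (m+1-k)).choose (b+1)
              = ∑ k ∈ Finset.range (m+2),
                ((a+k).choose a * (b + (m+1-k)).choose b
                  + (a+k).choose a * (b + (m+1-k)).choose (b+1)) := by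
            apply Finset.sum_congr rfl
            intro k hk
            have hk' : (b+1) + (m+1-k) = (b + (m+1-k)) + 1 := by omega
            rw [hk', Nat.choose_succ_succ, Nat.mul_add]
          rw [h1, Finset.sum_add_distrib]
          have h2 : ∑ k ∈ Finset.range (m+2),
              (a+k).choose a * (b + (m+1-k)).choose b
              = (a+b+(m+1)+1).choose (a+b+1) := ih (m+1)
          have h3 : ∑ k ∈ Finset.range (m+2),
              (a+k).choose a * (b + (m+1-k)).choose (b+1)
              = (a+(b+1)+m+1).choose (a+(b+1)+1) := by
            rw [Finset.sum_range_succ]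
            have hz : (b + (m+1-(m+1))).choose (b+1) = 0 := by
              simp [Nat.choose_succ_self]
            rw [hz, Nat.mul_zero, Nat.add_zero, ← ihm]
            apply Finset.sum_congr rfl
            intro k hk
            have : b + (m+1-k) = (b+1) + (m-k) := by
              simp only [Finset.mem_range] at hk; omega
            rw [this]
          rw [show a+b+(m+1)+1 = a+b+m+2 from by omega] at h2
          rw [show a+(b+1)+m+1 = a+b+m+2 from by omega,
            show a+(b+1)+1 = (a+b+1)+1 from by omega] at h3
          rw [h2, h3, show a+(b+1)+(m+1)+1 = (a+b+m+2)+1 from by omega,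
            show a+(b+1)+1 = (a+b+1)+1 from by omega]
          exact (Nat.choose_succ_succ _ _).symm

theorem stmt_6 (n : ℕ) (hn : 0 < n) :
    ∑ k ∈ Finset.range n,
      (1 / n : ℚ) * (Nat.choose (n - 1 + k) (n - 1)) * (Nat.choose (2 * n - k) (n + 1))
      = (1 / (2 * n + 1) : ℚ) * (Nat.choose (3 * n) n) := by
  obtain ⟨m, rfl⟩ : ∃ m, n = m + 1 := ⟨n - 1, by omega⟩
  have key : ∑ k ∈ Finset.range (m+1),
      (m + k).choose m * (2 * (m+1) - k).choose ((m+1)+1)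
      = (3 * (m+1)).choose (2 * (m+1) + 1) := by
    have h := vand m (m+2) m
    have h' : ∑ k ∈ Finset.range (m+1),
        (m + k).choose m * (2 * (m+1) - k).choose ((m+1)+1)
        = ∑ k ∈ Finset.range (m+1), (m+k).choose m * ((m+2) + (m-k)).choose (m+2) := by
      apply Finset.sum_congr rfl
      intro k hk
      simp only [Finset.mem_range] at hk
      congr 2 <;> omega
    rw [h', h]
    congr 1 <;> omega
  have hsymm : (3 * (m+1)).choose (2 * (m+1) + 1) = (3 * (m+1)).choose m := by
    have h := Nat.choose_symm (show 2 * (m+1) + 1 ≤ 3 * (m+1) from by omega)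
    rw [show 3 * (m+1) - (2 * (m+1) + 1) = m from by omega] at h
    exact h.symm
  have hrec : (3 * (m+1)).choose (m+1) * (m+1) = (3 * (m+1)).choose m * (2 * (m+1) + 1) := by
    have := Nat.choose_succ_right_eq (3 * (m+1)) m
    rw [this]
    congr 1
    omega
  -- now work in ℚ
  have hcast : ∑ k ∈ Finset.range (m+1),
      (((m + k).choose m : ℚ)) * (((2 * (m+1) - k).choose ((m+1)+1) : ℚ))
      = (((3 * (m+1)).choose m : ℚ)) := by
    rw [← hsymm]
    exact_mod_cast congrArg (fun x : ℕ => (x : ℚ)) key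
  have hm1 : ((m : ℕ) + 1 : ℕ) - 1 = m := by omega
  simp only [hm1]
  have hfold : ∑ k ∈ Finset.range (m+1),
      (1 / ((m:ℚ)+1)) * (((m + k).choose m : ℚ)) * (((2 * (m+1) - k).choose ((m+1)+1) : ℚ))
      = (1 / ((m:ℚ)+1)) * ∑ k ∈ Finset.range (m+1),
        (((m + k).choose m : ℚ)) * (((2 * (m+1) - k).choose ((m+1)+1) : ℚ)) := by
    rw [Finset.mul_sum]
    simp [mul_assoc]
  rw [show ((m+1 : ℕ) : ℚ) = (m : ℚ) + 1 by push_cast; ring] at *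
  rw [hfold, hcast]
  have hrecQ : (((3 * (m+1)).choose (m+1) : ℚ)) * ((m:ℚ)+1)
      = (((3 * (m+1)).choose m : ℚ)) * (2 * ((m:ℚ)+1) + 1) := by
    exact_mod_cast congrArg (fun x : ℕ => (x : ℚ)) hrec
  have h1 : ((m:ℚ)+1) ≠ 0 := by positivity
  have h2 : (2 * ((m:ℚ)+1) + 1) ≠ 0 := by positivity
  field_simp
  linarith [hrecQ]
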